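/- Let R be an integral domain which is a unique factorization domain, let m ≥ 1, and let p₁,…,pₘ be nonzero elements of R such that pᵢ and pⱼ are relatively prime whenever i ≠ j (every common divisor of pᵢ and pⱼ is a unit). Let P = diag(p₁,…,pₘ), and let Q and K be m × m matrices over R satisfying P·Q = K·P. Then Kᵢᵢ = Qᵢᵢ for every i, and there exists an m × m matrix R₀ over R with zero diagonal such that Q = R₀·P + D and K = P·R₀ + D, where D = diag(Q₁₁,…,Qₘₘ). -/

import Mathlib

/-- Let `P = diag(p₁,…,pₘ)` be a diagonal matrix over a UFD whose nonzero diagonal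
entries are pairwise relatively prime (no multiple components of the
characteristic variety), and let `Q`, `K` satisfy the symbol-level symmetry
condition `P·Q = K·P`. Then the diagonals of `K` and `Q` agree, and there is a
matrix `R₀` with zero diagonal such that `Q = R₀·P + D` and `K = P·R₀ + D`,
where `D = diag(Q₁₁,…,Qₘₘ)`. -/
theorem symmetry_diagonal_symbol_structure
    {R : Type*} [CommRing R] [IsDomain R] [UniqueFactorizationMonoid R]
    (m : ℕ) (hm : 1 ≤ m) (p : Fin m → R) (hp : ∀ i, p i ≠ 0)
    (hrel : ∀ i j, i ≠ j → IsRelPrime (p i) (p j))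
    (Q K : Matrix (Fin m) (Fin m) R)
    (hsym : Matrix.diagonal p * Q = K * Matrix.diagonal p) :
    (∀ i, K i i = Q i i) ∧
    ∃ R₀ : Matrix (Fin m) (Fin m) R, (∀ i, R₀ i i = 0) ∧
      Q = R₀ * Matrix.diagonal p + Matrix.diagonal (fun i => Q i i) ∧
      K = Matrix.diagonal p * R₀ + Matrix.diagonal (fun i => Q i i) := by
  have hentry : ∀ i j, p i * Q i j = K i j * p j := by
    intro i j
    have := congrFun (congrFun hsym i) j
    simpa [Matrix.diagonal_mul, Matrix.mul_diagonal] using this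
  have hdiag : ∀ i, K i i = Q i i := by
    intro i
    have h := hentry i i
    have := mul_left_cancel₀ (hp i) (h.trans (mul_comm _ _))
    exact this.symm
  refine ⟨hdiag, ?_⟩
  have hdvd : ∀ i j, i ≠ j → p j ∣ Q i j := by
    intro i j hij
    have h : p j ∣ Q i j * p i := ⟨K i j, by rw [mul_comm (Q i j) (p i), hentry i j, mul_comm]⟩
    exact (hrel j i (Ne.symm hij)).dvd_of_dvd_mul_right h
  classical
  refine ⟨Matrix.of fun i j => if h : i = j then 0 else (hdvd i j h).choose, fun i => by simp, ?_, ?_⟩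
  · ext i j
    by_cases h : i = j
    · subst h
      simp [Matrix.mul_apply, Matrix.diagonal_apply]
    · have hc := (hdvd i j h).choose_spec
      simp only [Matrix.add_apply, Matrix.mul_diagonal, Matrix.diagonal_apply, Matrix.of_apply,
        if_neg h, add_zero]
      rw [dif_neg h, mul_comm]
      exact hc
  · ext i j
    by_cases h : i = j
    · subst h
      simp [Matrix.diagonal_mul, Matrix.diagonal_apply, hdiag i]
    · have hc := (hdvd i j h).choose_spec
      have : p i * Q i j = K i j * p j := hentry i j
      have hKij : K i j * p j = p i * (p j * (hdvd i j h).choose) := by rw [← hc, ← this]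
      have : K i j = p i * (hdvd i j h).choose :=
        mul_right_cancel₀ (hp j) (by rw [hKij]; ring)
      simp only [Matrix.add_apply, Matrix.diagonal_mul, Matrix.diagonal_apply, Matrix.of_apply,
        if_neg h, add_zero]
      rw [dif_neg h]
      exact this
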